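/- Fix m ≥ 1, reals x₁,…,x_m, x′₁,…,x′_m ∈ [0,1] with x′_i > x_i for all i, a value F > 0, and cost c > 0. Define u recursively by u(x_m) = −c + x_m·F and u(x_i,…,x_m) = −c + x_i·u(x_{i+1},…,x_m). If u(x_1,…,x_m) ≥ 0, then u(x_i,…,x_m) > 0 for all i ≥ 2, and u(x′_1,…,x′_m) > u(x_1,…,x_m). -/

import Mathlib

/-- Expected utility of the "play-while-winning" policy: pay cost `c` each
round, continue only on success, obtain terminal score `F` after all
successes. `utilRec c F [x_i, …, x_m] = -c + x_i * utilRec c F [x_{i+1}, …, x_m]`,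
with `utilRec c F [] = F`. -/
def utilRec (c F : ℝ) : List ℝ → ℝ
  | [] => F
  | x :: xs => -c + x * utilRec c F xs

lemma utilRec_tail_pos {c F x : ℝ} {xs : List ℝ} (hc : 0 < c)
    (hx : x ∈ Set.Icc (0 : ℝ) 1) (h : 0 ≤ utilRec c F (x :: xs)) :
    0 < utilRec c F xs := by
  simp only [utilRec] at h
  by_contra hle
  push_neg at hle
  have : x * utilRec c F xs ≤ 0 := mul_nonpos_of_nonneg_of_nonpos hx.1 hle
  linarith

lemma utilRec_drop_pos {c F : ℝ} (hc : 0 < c) (hF : 0 < F) :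
    ∀ (xs : List ℝ) (k : ℕ), (∀ x ∈ xs, x ∈ Set.Icc (0 : ℝ) 1) →
      0 ≤ utilRec c F xs → 0 < utilRec c F (xs.drop (k + 1))
  | [], k, _, _ => by simpa [utilRec] using hF
  | x :: t, k, hmem, h => by
    have ht : 0 < utilRec c F t :=
      utilRec_tail_pos hc (hmem x List.mem_cons_self) h
    have hmt : ∀ y ∈ t, y ∈ Set.Icc (0 : ℝ) 1 := fun y hy =>
      hmem y (List.mem_cons_of_mem _ hy)
    cases k with
    | zero => simpa using ht
    | succ k =>
      simpa using utilRec_drop_pos hc hF t k hmt ht.le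

lemma utilRec_mono {c F : ℝ} (hc : 0 < c) :
    ∀ {xs xs' : List ℝ}, List.Forall₂ (· < ·) xs xs' →
      (∀ x ∈ xs, x ∈ Set.Icc (0 : ℝ) 1) →
      (∀ x ∈ xs', x ∈ Set.Icc (0 : ℝ) 1) →
      0 ≤ utilRec c F xs →
      (xs = [] ∧ utilRec c F xs = utilRec c F xs')
        ∨ utilRec c F xs < utilRec c F xs' := by
  intro xs xs' h
  induction h with
  | nil => intro _ _ _; exact Or.inl ⟨rfl, rfl⟩
  | @cons x x' t t' hxx ht ih =>
    intro hmem hmem' hnn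
    right
    have hx : x ∈ Set.Icc (0 : ℝ) 1 := hmem x List.mem_cons_self
    have hx' : x' ∈ Set.Icc (0 : ℝ) 1 := hmem' x' List.mem_cons_self
    have hmt : ∀ y ∈ t, y ∈ Set.Icc (0 : ℝ) 1 := fun y hy =>
      hmem y (List.mem_cons_of_mem _ hy)
    have hmt' : ∀ y ∈ t', y ∈ Set.Icc (0 : ℝ) 1 := fun y hy =>
      hmem' y (List.mem_cons_of_mem _ hy)
    have htpos : 0 < utilRec c F t := utilRec_tail_pos hc hx hnn
    have hle : utilRec c F t ≤ utilRec c F t' := by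
      rcases ih hmt hmt' htpos.le with ⟨_, he⟩ | hlt
      · exact he.le
      · exact hlt.le
    have h1 : x * utilRec c F t < x' * utilRec c F t :=
      mul_lt_mul_of_pos_right hxx htpos
    have h2 : x' * utilRec c F t ≤ x' * utilRec c F t' :=
      mul_le_mul_of_nonneg_left hle hx'.1
    simp only [utilRec]
    linarith

theorem stmt_11 (m : ℕ) (hm : 1 ≤ m) (c F : ℝ) (hc : 0 < c) (hF : 0 < F)
    (xs xs' : List ℝ) (hlen : xs.length = m)
    (hmem : ∀ x ∈ xs, x ∈ Set.Icc (0 : ℝ) 1)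
    (hmem' : ∀ x ∈ xs', x ∈ Set.Icc (0 : ℝ) 1)
    (hlt : List.Forall₂ (· < ·) xs xs')
    (hnn : 0 ≤ utilRec c F xs) :
    (∀ i : ℕ, 2 ≤ i → i ≤ m → 0 < utilRec c F (xs.drop (i - 1)))
    ∧ utilRec c F xs < utilRec c F xs' := by
  constructor
  · intro i h2 _
    obtain ⟨k, hk⟩ : ∃ k, i - 1 = k + 1 := ⟨i - 2, by omega⟩
    rw [hk]
    exact utilRec_drop_pos hc hF xs k hmem hnn
  · rcases utilRec_mono hc hlt hmem hmem' hnn with ⟨he, _⟩ | h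
    · subst he; simp at hlen; omega
    · exact h
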